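/- Let f : ℝ^d → ℝ be continuously differentiable with global minimum value f(x*), let γ, α, ρ > 0, and let (x, p, ξ) be a solution of the iKFAD dynamics on [0, ∞) with ξ(t) ≥ 0 componentwise for all t ≥ 0. Then the function 𝒢(t) = f(x(t)) − f(x*) + (1/2)‖p(t)‖² + (ρ/2)‖ξ(t)‖² satisfies 𝒢'(t) = −γ‖p(t)‖² − αρ‖ξ(t)‖² ≤ 0 for all t ≥ 0; in particular 𝒢 is nonincreasing. -/

import Mathlib

/-- Componentwise (Hadamard) product of two vectors in `ℝ^d`. -/
noncomputable def cwMul {d : ℕ} (a b : EuclideanSpace ℝ (Fin d)) :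
    EuclideanSpace ℝ (Fin d) := WithLp.toLp 2 (fun i => a i * b i)

/-- Componentwise square of a vector in `ℝ^d`. -/
noncomputable def cwSq {d : ℕ} (a : EuclideanSpace ℝ (Fin d)) :
    EuclideanSpace ℝ (Fin d) := WithLp.toLp 2 (fun i => a i ^ 2)

lemma cw_inner_key {d : ℕ} (ξp pp : EuclideanSpace ℝ (Fin d)) :
    inner ℝ pp (cwMul ξp pp) = (inner ℝ ξp (cwSq pp) : ℝ) := by
  simp only [PiLp.inner_apply, cwMul, cwSq, RCLike.inner_apply, conj_trivial, PiLp.toLp_apply]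
  exact Finset.sum_congr rfl fun i _ => by ring

/-- Along solutions of the iKFAD dynamics, the energy
`𝒢(t) = f(x(t)) - f(x*) + ½‖p(t)‖² + (ρ/2)‖ξ(t)‖²` has derivative
`-γ‖p(t)‖² - αρ‖ξ(t)‖² ≤ 0`; in particular `𝒢` is nonincreasing on `[0, ∞)`. -/
theorem ikfad_lyapunov_decreasing
    (d : ℕ) (f : EuclideanSpace ℝ (Fin d) → ℝ)
    (hf : ContDiff ℝ 1 f)
    (xstar : EuclideanSpace ℝ (Fin d)) (hmin : ∀ y, f xstar ≤ f y)
    (γ α ρ : ℝ) (hγ : 0 < γ) (hα : 0 < α) (hρ : 0 < ρ)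
    (x p ξ : ℝ → EuclideanSpace ℝ (Fin d))
    (hξnonneg : ∀ t : ℝ, 0 ≤ t → ∀ i, 0 ≤ ξ t i)
    (hx : ∀ t, 0 ≤ t → HasDerivAt x (p t) t)
    (hp : ∀ t, 0 ≤ t → HasDerivAt p
      (-gradient f (x t) - γ • p t - cwMul (ξ t) (p t)) t)
    (hξ : ∀ t, 0 ≤ t → HasDerivAt ξ (ρ⁻¹ • cwSq (p t) - α • ξ t) t) :
    (∀ t : ℝ, 0 ≤ t →
      HasDerivAt
        (fun s => f (x s) - f xstar + (1 / 2) * ‖p s‖ ^ 2 + (ρ / 2) * ‖ξ s‖ ^ 2)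
        (-γ * ‖p t‖ ^ 2 - α * ρ * ‖ξ t‖ ^ 2) t ∧
      -γ * ‖p t‖ ^ 2 - α * ρ * ‖ξ t‖ ^ 2 ≤ 0) ∧
    AntitoneOn
      (fun s => f (x s) - f xstar + (1 / 2) * ‖p s‖ ^ 2 + (ρ / 2) * ‖ξ s‖ ^ 2)
      (Set.Ici (0 : ℝ)) := by
  have key : ∀ t : ℝ, 0 ≤ t →
      HasDerivAt
        (fun s => f (x s) - f xstar + (1 / 2) * ‖p s‖ ^ 2 + (ρ / 2) * ‖ξ s‖ ^ 2)
        (-γ * ‖p t‖ ^ 2 - α * ρ * ‖ξ t‖ ^ 2) t := by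
    intro t ht
    set g := gradient f (x t) with hg
    set p' := -g - γ • p t - cwMul (ξ t) (p t) with hp'
    set ξ' := ρ⁻¹ • cwSq (p t) - α • ξ t with hξ'
    have hdf : HasDerivAt (fun s => f (x s)) (inner ℝ g (p t) : ℝ) t := by
      have hgrad : HasGradientAt f g (x t) :=
        (hf.differentiable one_ne_zero (x t)).hasGradientAt
      have := hgrad.hasFDerivAt.comp_hasDerivAt t (hx t ht)
      simp [InnerProductSpace.toDual_apply_apply] at this
      exact this
    have hdp : HasDerivAt (fun s => (inner ℝ (p s) (p s) : ℝ))
        ((inner ℝ (p t) p' : ℝ) + inner ℝ p' (p t)) t :=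
      (hp t ht).inner ℝ (hp t ht)
    have hdξ : HasDerivAt (fun s => (inner ℝ (ξ s) (ξ s) : ℝ))
        ((inner ℝ (ξ t) ξ' : ℝ) + inner ℝ ξ' (ξ t)) t :=
      (hξ t ht).inner ℝ (hξ t ht)
    have htot := ((hdf.sub_const (f xstar)).add
        (hdp.const_mul (1 / 2 : ℝ))).add (hdξ.const_mul (ρ / 2 : ℝ))
    have hfun : (fun s => f (x s) - f xstar + (1 / 2) * ‖p s‖ ^ 2
        + (ρ / 2) * ‖ξ s‖ ^ 2)
        = fun s => f (x s) - f xstar + (1 / 2) * (inner ℝ (p s) (p s) : ℝ)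
        + (ρ / 2) * (inner ℝ (ξ s) (ξ s) : ℝ) := by
      funext s
      rw [real_inner_self_eq_norm_sq, real_inner_self_eq_norm_sq]
    rw [hfun]
    convert htot using 1
    · rfl
    · rfl
    · rfl
    have hcw : (inner ℝ (p t) (cwMul (ξ t) (p t)) : ℝ)
        = inner ℝ (ξ t) (cwSq (p t)) := cw_inner_key _ _
    have h1 : (inner ℝ p' (p t) : ℝ) = inner ℝ (p t) p' := real_inner_comm _ _
    have h2 : (inner ℝ ξ' (ξ t) : ℝ) = inner ℝ (ξ t) ξ' := real_inner_comm _ _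
    rw [h1, h2, ← real_inner_self_eq_norm_sq, ← real_inner_self_eq_norm_sq,
      hp', hξ']
    rw [inner_sub_right, inner_sub_right, inner_sub_right, inner_neg_right,
      real_inner_smul_right, real_inner_smul_right, real_inner_smul_right,
      hcw, real_inner_comm g (p t)]
    have hρ' : ρ ≠ 0 := ne_of_gt hρ
    set A := (inner ℝ (p t) (p t) : ℝ)
    set B := (inner ℝ (ξ t) (ξ t) : ℝ)
    set C := (inner ℝ (p t) g : ℝ)
    set D := (inner ℝ (ξ t) (cwSq (p t)) : ℝ)
    field_simp
    ring
  refine ⟨fun t ht => ⟨key t ht, ?_⟩, ?_⟩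
  · have : 0 ≤ γ * ‖p t‖ ^ 2 + α * ρ * ‖ξ t‖ ^ 2 := by positivity
    linarith
  · apply antitoneOn_of_deriv_nonpos (convex_Ici 0)
    · intro t ht
      exact ((key t ht).continuousAt).continuousWithinAt
    · intro t ht
      rw [interior_Ici] at ht
      exact ((key t (le_of_lt ht)).differentiableAt).differentiableWithinAt
    · intro t ht
      rw [interior_Ici] at ht
      rw [(key t (le_of_lt ht)).deriv]
      have : 0 ≤ γ * ‖p t‖ ^ 2 + α * ρ * ‖ξ t‖ ^ 2 := by positivity
      linarith
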